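/- Correctness of the ancilla-free adder structure: the composition of the seven slices of Algorithm 2 — (1) b_i ↦ b_i ⊕ a_i for 1 ≤ i ≤ n−1; (2) apply the CNOT ladder L1 to (a_1,...,a_{n−1},z); (3) apply the inverse Toffoli ladder L2⁻¹ to ((a_0,...,a_{n−1},z), (b_0,...,b_{n−1})); (4) b_i ↦ b_i ⊕ a_i for 1 ≤ i ≤ n−1 and b_i ↦ b_i ⊕ 1 for 1 ≤ i ≤ n−2; (5) apply L2 to ((a_0,...,a_{n−1}), (b_0,...,b_{n−2})); (6) apply L1⁻¹ to (a_1,...,a_{n−1}); (7) b_i ↦ b_i ⊕ a_i for 0 ≤ i ≤ n−1 and b_i ↦ b_i ⊕ 1 for 1 ≤ i ≤ n−2 — maps (a, b, z) to (a, (a + b) mod 2^n, z ⊕ carry), where carry is the n-th bit of a + b. -/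

import Mathlib

/-- The inverse-Toffoli-ladder recursion (`L2⁻¹`): `x''_0 = x_0` and
`x''_{i+1} = x_{i+1} ⊕ x''_i·y_i`. -/
def carryProp (x y : ℕ → ZMod 2) : ℕ → ZMod 2
  | 0 => x 0
  | i + 1 => x (i + 1) + carryProp x y i * y i

/-- The ripple-carry sequence of the integer addition `a + b`. -/
def addCarry (a b : ℕ → ZMod 2) : ℕ → ZMod 2
  | 0 => 0
  | i + 1 => a i * b i + addCarry a b i * (a i + b i)

lemma sum_bits_lt (s : ℕ → ZMod 2) (n : ℕ) :
    (∑ j ∈ Finset.range n, (s j).val * 2 ^ j) < 2 ^ n := by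
  induction n with
  | zero => simp
  | succ n ih =>
    rw [Finset.sum_range_succ, pow_succ]
    have h1 : (s n).val ≤ 1 := by have := (s n).val_lt; omega
    have h2 : (s n).val * 2 ^ n ≤ 2 ^ n := by
      calc (s n).val * 2 ^ n ≤ 1 * 2 ^ n := Nat.mul_le_mul_right _ h1
        _ = 2 ^ n := one_mul _
    omega

lemma bits_div (s : ℕ → ZMod 2) (n i : ℕ) (h : i < n) :
    (∑ j ∈ Finset.range n, (s j).val * 2 ^ j) / 2 ^ i % 2 = (s i).val := by
  induction n with
  | zero => omega
  | succ n ih =>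
    rw [Finset.sum_range_succ]
    rcases Nat.lt_or_ge i n with h' | h'
    · have e : (s n).val * 2 ^ n = 2 * ((s n).val * 2 ^ (n - i - 1)) * 2 ^ i := by
        have e2 : 2 * 2 ^ (n - i - 1) * 2 ^ i = 2 ^ n := by
          rw [← pow_succ', ← pow_add]
          congr 1
          omega
        rw [← e2]
        ring
      rw [e, Nat.add_mul_div_right _ _ (pow_pos (by norm_num) i),
        Nat.add_mul_mod_self_left]
      exact ih h'
    · have hi : i = n := by omega
      subst hi
      rw [Nat.add_mul_div_right _ _ (pow_pos (by norm_num) i),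
        Nat.div_eq_of_lt (sum_bits_lt s i)]
      have := (s i).val_lt
      omega

lemma adder_sum (a b : ℕ → ZMod 2) (n : ℕ) :
    (∑ j ∈ Finset.range n, (a j).val * 2 ^ j) + (∑ j ∈ Finset.range n, (b j).val * 2 ^ j)
      = (∑ j ∈ Finset.range n, (a j + b j + addCarry a b j).val * 2 ^ j)
        + (addCarry a b n).val * 2 ^ n := by
  induction n with
  | zero => simp [addCarry]
  | succ n ih =>
    rw [Finset.sum_range_succ, Finset.sum_range_succ, Finset.sum_range_succ]
    have key : ∀ x y w : ZMod 2,
        x.val + y.val + w.val = (x + y + w).val + 2 * (x * y + w * (x + y)).val := by decide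
    have hk := key (a n) (b n) (addCarry a b n)
    have hcar : addCarry a b (n + 1) = a n * b n + addCarry a b n * (a n + b n) := rfl
    calc (∑ j ∈ Finset.range n, (a j).val * 2 ^ j) + (a n).val * 2 ^ n
          + ((∑ j ∈ Finset.range n, (b j).val * 2 ^ j) + (b n).val * 2 ^ n)
        = ((∑ j ∈ Finset.range n, (a j).val * 2 ^ j)
            + (∑ j ∈ Finset.range n, (b j).val * 2 ^ j))
          + ((a n).val + (b n).val) * 2 ^ n := by ring
      _ = ((∑ j ∈ Finset.range n, (a j + b j + addCarry a b j).val * 2 ^ j)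
            + (addCarry a b n).val * 2 ^ n) + ((a n).val + (b n).val) * 2 ^ n := by rw [ih]
      _ = (∑ j ∈ Finset.range n, (a j + b j + addCarry a b j).val * 2 ^ j)
            + ((a n).val + (b n).val + (addCarry a b n).val) * 2 ^ n := by ring
      _ = (∑ j ∈ Finset.range n, (a j + b j + addCarry a b j).val * 2 ^ j)
            + ((a n + b n + addCarry a b n).val
                + 2 * (a n * b n + addCarry a b n * (a n + b n)).val) * 2 ^ n := by rw [hk]
      _ = ((∑ j ∈ Finset.range n, (a j + b j + addCarry a b j).val * 2 ^ j)
            + (a n + b n + addCarry a b n).val * 2 ^ n)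
            + (a n * b n + addCarry a b n * (a n + b n)).val * 2 ^ (n + 1) := by
          rw [pow_succ]; ring
      _ = _ := by rw [hcar]

lemma key2 : ∀ u x y w : ZMod 2,
    u + x + (x + w) * (y + x) = u + (x * y + w * (x + y)) := by decide

lemma key3 : ∀ v x y : ZMod 2,
    v + (x * y + 0 * (x + y)) + x * y = v := by decide

lemma key4 : ∀ v x y w : ZMod 2,
    v + (x * y + w * (x + y)) + (x + w) * (y + w + 1) = v + x := by decide

lemma key6 : ∀ u x w : ZMod 2, u + x + (x + w) + 1 = u + w + 1 := by decide

lemma key7 : ∀ x y : ZMod 2, x + (y + x) = y := by decide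

theorem adder_no_ancilla_correct (n : ℕ) (hn : 1 ≤ n) (a b : ℕ → ZMod 2) (z : ZMod 2) :
    -- register (a_0, ..., a_{n-1}, z)
    let X0 : ℕ → ZMod 2 := fun i => if i = n then z else a i
    -- Slice 1: b_i ↦ b_i ⊕ a_i for 1 ≤ i ≤ n-1
    let B1 : ℕ → ZMod 2 := fun i => if 1 ≤ i ∧ i ≤ n - 1 then b i + a i else b i
    -- Slice 2: CNOT ladder L1 on (a_1, ..., a_{n-1}, z)
    let X1 : ℕ → ZMod 2 := fun i => if 2 ≤ i ∧ i ≤ n then X0 i + X0 (i - 1) else X0 i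
    -- Slice 3: inverse Toffoli ladder L2⁻¹ on ((a_0, ..., a_{n-1}, z), (b_0, ..., b_{n-1}))
    let X2 : ℕ → ZMod 2 := carryProp X1 B1
    -- Slice 4: b_i ↦ b_i ⊕ a_i for 1 ≤ i ≤ n-1, then b_i ↦ b_i ⊕ 1 for 1 ≤ i ≤ n-2
    let B2 : ℕ → ZMod 2 := fun i => if 1 ≤ i ∧ i ≤ n - 1 then B1 i + X2 i else B1 i
    let B3 : ℕ → ZMod 2 := fun i => if 1 ≤ i ∧ i ≤ n - 2 then B2 i + 1 else B2 i
    -- Slice 5: Toffoli ladder L2 on ((a_0, ..., a_{n-1}), (b_0, ..., b_{n-2}))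
    let X3 : ℕ → ZMod 2 := fun i =>
      if 1 ≤ i ∧ i ≤ n - 1 then X2 i + X2 (i - 1) * B3 (i - 1) else X2 i
    -- Slice 6: inverse CNOT ladder L1⁻¹ (prefix XOR) on (a_1, ..., a_{n-1})
    let X4 : ℕ → ZMod 2 := fun i =>
      if 1 ≤ i ∧ i ≤ n - 1 then ∑ j ∈ Finset.Icc 1 i, X3 j else X3 i
    -- Slice 7: b_i ↦ b_i ⊕ a_i for 0 ≤ i ≤ n-1, then b_i ↦ b_i ⊕ 1 for 1 ≤ i ≤ n-2
    let B4 : ℕ → ZMod 2 := fun i => if i ≤ n - 1 then B3 i + X4 i else B3 i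
    let B5 : ℕ → ZMod 2 := fun i => if 1 ≤ i ∧ i ≤ n - 2 then B4 i + 1 else B4 i
    -- the represented integers
    let va : ℕ := ∑ i ∈ Finset.range n, (a i).val * 2 ^ i
    let vb : ℕ := ∑ i ∈ Finset.range n, (b i).val * 2 ^ i
    -- final state: a unchanged, b holds (a+b) mod 2^n, z is XORed with the carry
    (∀ i < n, X4 i = a i) ∧
    (X4 n = z + if (va + vb).testBit n then 1 else 0) ∧
    (∀ i < n, (B5 i).val = (va + vb) % 2 ^ n / 2 ^ i % 2) := by
  intro X0 B1 X1 X2 B2 B3 X3 X4 B4 B5 va vb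
  set c := addCarry a b with hc
  have hc0 : c 0 = 0 := rfl
  have hcsucc : ∀ i, c (i + 1) = a i * b i + c i * (a i + b i) := fun i => rfl
  have two_cases : ∀ x : ZMod 2, x = 0 ∨ x = 1 := by decide
  -- the X2 register after slice 3
  have hX2 : ∀ i ≤ n, X2 i
      = if i = 0 then a 0 else if i = n then z + c n else a i + c i := by
    intro i hi
    induction i with
    | zero =>
      rw [if_pos rfl]
      show X1 0 = a 0
      simp only [X1, X0]
      rw [if_neg (by omega), if_neg (by omega)]
    | succ i ih =>
      have e : X2 (i + 1) = X1 (i + 1) + X2 i * B1 i := rfl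
      rw [if_neg (by omega)]
      rcases Nat.eq_zero_or_pos i with h0 | h1
      · subst h0
        have ihh := ih (by omega)
        rw [if_pos rfl] at ihh
        have hB10 : B1 0 = b 0 := by simp only [B1]; rw [if_neg (by omega)]
        have hX11 : X1 1 = if 1 = n then z else a 1 := by
          simp only [X1, X0]; rw [if_neg (by omega)]
        rw [e, ihh, hB10, hX11]
        by_cases h1n : 1 = n
        · rw [if_pos h1n, if_pos h1n, ← h1n, hcsucc 0, hc0]
          ring
        · rw [if_neg h1n, if_neg h1n, hcsucc 0, hc0]
          ring
      · have ihh := ih (by omega)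
        rw [if_neg (by omega), if_neg (by omega)] at ihh
        have hB1i : B1 i = b i + a i := by
          simp only [B1]; rw [if_pos ⟨h1, by omega⟩]
        have hX0i : X0 i = a i := by simp only [X0]; rw [if_neg (by omega)]
        have hX1 : X1 (i + 1) = X0 (i + 1) + a i := by
          simp only [X1]
          rw [if_pos ⟨by omega, hi⟩, Nat.add_sub_cancel, hX0i]
        by_cases hin : i + 1 = n
        · have hX01 : X0 (i + 1) = z := by simp only [X0]; rw [if_pos hin]
          rw [if_pos hin, e, ihh, hB1i, hX1, hX01, ← hin, hcsucc i]
          linear_combination key2 z (a i) (b i) (c i)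
        · have hX01 : X0 (i + 1) = a (i + 1) := by simp only [X0]; rw [if_neg hin]
          rw [if_neg hin, e, ihh, hB1i, hX1, hX01, hcsucc i]
          linear_combination key2 (a (i + 1)) (a i) (b i) (c i)
  have hX2_0 : X2 0 = a 0 := by
    have := hX2 0 (by omega); rwa [if_pos rfl] at this
  have hX2_mid : ∀ i, 1 ≤ i → i < n → X2 i = a i + c i := by
    intro i h1 h2
    have := hX2 i (by omega)
    rwa [if_neg (by omega), if_neg (by omega)] at this
  have hX2_n : X2 n = z + c n := by
    have := hX2 n le_rfl
    rwa [if_neg (by omega), if_pos rfl] at this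
  -- B3 in the middle range
  have hB3mid : ∀ i, 1 ≤ i → i ≤ n - 2 → B3 i = b i + c i + 1 := by
    intro i h1 h2
    simp only [B3, B2, B1]
    rw [if_pos ⟨h1, h2⟩, if_pos ⟨h1, by omega⟩, if_pos ⟨h1, by omega⟩,
      hX2_mid i h1 (by omega)]
    linear_combination key6 (b i) (a i) (c i)
  have hB30 : B3 0 = b 0 := by
    simp only [B3, B2, B1]
    rw [if_neg (by omega), if_neg (by omega), if_neg (by omega)]
  -- the X3 register after slice 5
  have hX3_0 : X3 0 = a 0 := by
    simp only [X3]; rw [if_neg (by omega)]; exact hX2_0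
  have hX3_1 : 1 < n → X3 1 = a 1 := by
    intro h
    simp only [X3]
    rw [if_pos ⟨le_rfl, by omega⟩]
    show X2 1 + X2 0 * B3 0 = a 1
    rw [hX2_mid 1 le_rfl h, hX2_0, hB30, hcsucc 0, hc0]
    linear_combination key3 (a 1) (a 0) (b 0)
  have hX3_mid : ∀ j, 1 ≤ j → j + 1 ≤ n - 1 → X3 (j + 1) = a (j + 1) + a j := by
    intro j h1 h2
    simp only [X3]
    rw [if_pos ⟨by omega, h2⟩, Nat.add_sub_cancel,
      hX2_mid (j + 1) (by omega) (by omega), hX2_mid j h1 (by omega),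
      hB3mid j h1 (by omega), hcsucc j]
    linear_combination key4 (a (j + 1)) (a j) (b j) (c j)
  -- the X4 register after slice 6
  have hX4sum : ∀ i, 1 ≤ i → i ≤ n - 1 → (∑ j ∈ Finset.Icc 1 i, X3 j) = a i := by
    intro i
    induction i with
    | zero => omega
    | succ i ih =>
      intro _ h
      rcases Nat.eq_zero_or_pos i with h0 | h1
      · subst h0
        rw [Finset.Icc_self, Finset.sum_singleton]
        exact hX3_1 (by omega)
      · rw [Finset.sum_Icc_succ_top (by omega), ih h1 (by omega), hX3_mid i h1 h]
        exact key7 (a i) (a (i + 1))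
  have hX4 : ∀ i, i ≤ n - 1 → X4 i = a i := by
    intro i hi
    rcases Nat.eq_zero_or_pos i with h0 | h1
    · subst h0
      simp only [X4]
      rw [if_neg (by omega)]
      exact hX3_0
    · simp only [X4]
      rw [if_pos ⟨h1, hi⟩]
      exact hX4sum i h1 hi
  have hX4n : X4 n = z + c n := by
    simp only [X4, X3]
    rw [if_neg (by omega), if_neg (by omega)]
    exact hX2_n
  -- the final B register
  have hB5 : ∀ i, i < n → B5 i = a i + b i + c i := by
    intro i hi
    rcases Nat.eq_zero_or_pos i with h0 | h1
    · subst h0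
      simp only [B5, B4]
      rw [if_neg (by omega), if_pos (by omega), hB30, hX4 0 (by omega), hc0]
      ring
    · by_cases him : i ≤ n - 2
      · simp only [B5, B4]
        rw [if_pos ⟨h1, him⟩, if_pos (by omega), hB3mid i h1 him, hX4 i (by omega)]
        have k8 : ∀ x y w : ZMod 2, y + w + 1 + x + 1 = x + y + w := by decide
        exact k8 (a i) (b i) (c i)
      · -- i = n - 1
        simp only [B5, B4, B3, B2, B1]
        rw [if_neg (by omega), if_pos (by omega), if_neg (by omega),
          if_pos ⟨h1, by omega⟩, if_pos ⟨h1, by omega⟩,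
          hX2_mid i h1 hi, hX4 i (by omega)]
        have k9 : ∀ x y w : ZMod 2, y + x + (x + w) + x = x + y + w := by decide
        exact k9 (a i) (b i) (c i)
  -- arithmetic facts
  have hsum : va + vb
      = (∑ j ∈ Finset.range n, (a j + b j + c j).val * 2 ^ j) + (c n).val * 2 ^ n :=
    adder_sum a b n
  have hS : (∑ j ∈ Finset.range n, (a j + b j + c j).val * 2 ^ j) < 2 ^ n :=
    sum_bits_lt (fun j => a j + b j + c j) n
  have hdivn : (va + vb) / 2 ^ n % 2 = (c n).val := by
    rw [hsum, Nat.add_mul_div_right _ _ (pow_pos (by norm_num) n),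
      Nat.div_eq_of_lt hS, zero_add]
    exact Nat.mod_eq_of_lt (c n).val_lt
  have hmod : (va + vb) % 2 ^ n
      = ∑ j ∈ Finset.range n, (a j + b j + c j).val * 2 ^ j := by
    rw [hsum, Nat.add_mul_mod_self_right]
    exact Nat.mod_eq_of_lt hS
  refine ⟨fun i hi => hX4 i (by omega), ?_, fun i hi => ?_⟩
  · rw [hX4n]
    congr 1
    have hv1 : (1 : ZMod 2).val = 1 := by decide
    have hv0 : (0 : ZMod 2).val = 0 := by decide
    rcases two_cases (c n) with h | h <;>
      simp [Nat.testBit_eq_decide_div_mod_eq, hdivn, h, hv0, hv1]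
  · have hbd := bits_div (fun j => a j + b j + c j) n i hi
    rw [hmod, hbd, hB5 i hi]
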